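/- In the lamplighter graph Lamp, for every vertex (S,p) with S ⊆ [0,p] and p ≥ 0, the vertices (∅,0) and (S,p) are exponentially (2^{1/4}, 6)-connected: for every R with 6 ≤ R < d((∅,0),(S,p))/2, there exist at least (2^{1/4})^R paths α₁,…,α_N from (∅,0) to (S,p), each of length at most 6·d((∅,0),(S,p)), such that the portions of the αᵢ outside the R-balls around the two endpoints are pairwise disjoint. -/

import Mathlib

open SimpleGraph

/-- The lamplighter graph: vertices are pairs (S,p) with S ⊂ ℤ finite and p ∈ ℤ;
edges connect (S,p) to (S,p±1), and (S,p) to (S △ {p}, p). -/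
def lampGraph : SimpleGraph (Finset ℤ × ℤ) :=
  SimpleGraph.fromRel (fun v w =>
    (v.1 = w.1 ∧ (w.2 = v.2 + 1 ∨ v.2 = w.2 + 1)) ∨
    (v.2 = w.2 ∧ w.1 = symmDiff v.1 {v.2}))

namespace LampAux

open Finset

abbrev V : Type := Finset ℤ × ℤ

lemma adj_right (A : Finset ℤ) (q : ℤ) : lampGraph.Adj (A, q) (A, q + 1) := by
  rw [lampGraph, SimpleGraph.fromRel_adj]
  refine ⟨?_, Or.inl (Or.inl ⟨rfl, Or.inl rfl⟩)⟩
  simp [Prod.ext_iff]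

lemma adj_toggle (A : Finset ℤ) (q : ℤ) : lampGraph.Adj (A, q) (symmDiff A {q}, q) := by
  rw [lampGraph, SimpleGraph.fromRel_adj]
  constructor
  · intro h
    have h1 : A = symmDiff A {q} := congrArg Prod.fst h
    have hq : q ∈ A ↔ q ∈ symmDiff A {q} := by rw [← h1]
    simp [Finset.mem_symmDiff] at hq
  · exact Or.inl (Or.inr ⟨rfl, rfl⟩)

lemma sd_empty (A : Finset ℤ) : symmDiff A (∅ : Finset ℤ) = A := by
  ext x; simp [Finset.mem_symmDiff]

lemma inter_Icc_self {X : Finset ℤ} {q : ℤ} (hq : q ∈ X) : X ∩ Finset.Icc q q = {q} := by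
  ext x
  simp only [Finset.mem_inter, Finset.mem_Icc, Finset.mem_singleton]
  constructor
  · rintro ⟨hx, h1, h2⟩; omega
  · rintro rfl; exact ⟨hq, le_rfl, le_rfl⟩

lemma insert_inter_Icc {X : Finset ℤ} {q r : ℤ} (hq : q ∈ X) (hr : q ≤ r) :
    X ∩ Finset.Icc q r = insert q (X ∩ Finset.Icc (q+1) r) := by
  ext x
  simp only [Finset.mem_inter, Finset.mem_Icc, Finset.mem_insert]
  constructor
  · rintro ⟨hx, h1, h2⟩
    by_cases hxq : x = q
    · exact Or.inl hxq
    · exact Or.inr ⟨hx, by omega, h2⟩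
  · rintro (rfl | ⟨hx, h1, h2⟩)
    · exact ⟨hq, le_rfl, hr⟩
    · exact ⟨hx, by omega, h2⟩

lemma insert_inter_Ico {X : Finset ℤ} {q r : ℤ} (hq : q ∈ X) (hr : q < r) :
    X ∩ Finset.Ico q r = insert q (X ∩ Finset.Ico (q+1) r) := by
  ext x
  simp only [Finset.mem_inter, Finset.mem_Ico, Finset.mem_insert]
  constructor
  · rintro ⟨hx, h1, h2⟩
    by_cases hxq : x = q
    · exact Or.inl hxq
    · exact Or.inr ⟨hx, by omega, h2⟩
  · rintro (rfl | ⟨hx, h1, h2⟩)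
    · exact ⟨hq, le_rfl, hr⟩
    · exact ⟨hx, by omega, h2⟩

lemma skip_inter_Icc {X : Finset ℤ} {q r : ℤ} (hq : q ∉ X) :
    X ∩ Finset.Icc q r = X ∩ Finset.Icc (q+1) r := by
  ext x
  simp only [Finset.mem_inter, Finset.mem_Icc]
  constructor
  · rintro ⟨hx, h1, h2⟩
    have : x ≠ q := fun h => hq (h ▸ hx)
    exact ⟨hx, by omega, h2⟩
  · rintro ⟨hx, h1, h2⟩
    exact ⟨hx, by omega, h2⟩

lemma skip_inter_Ico {X : Finset ℤ} {q r : ℤ} (hq : q ∉ X) :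
    X ∩ Finset.Ico q r = X ∩ Finset.Ico (q+1) r := by
  ext x
  simp only [Finset.mem_inter, Finset.mem_Ico]
  constructor
  · rintro ⟨hx, h1, h2⟩
    have : x ≠ q := fun h => hq (h ▸ hx)
    exact ⟨hx, by omega, h2⟩
  · rintro ⟨hx, h1, h2⟩
    exact ⟨hx, by omega, h2⟩

lemma symmDiff_insert (A B : Finset ℤ) (q : ℤ) (h : q ∉ B) :
    symmDiff A (insert q B) = symmDiff (symmDiff A {q}) B := by
  ext x
  by_cases hx : x = q
  · subst hx
    simp only [Finset.mem_symmDiff, Finset.mem_insert, Finset.mem_singleton]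
    tauto
  · simp only [Finset.mem_symmDiff, Finset.mem_insert, Finset.mem_singleton]
    tauto

/-- The fundamental sweep walk: starting at `(A,q)`, walk `n` steps to the right,
toggling every lamp of `X` encountered (including at position `q+n`). -/
lemma sweep_exists (X : Finset ℤ) :
    ∀ (n : ℕ) (A : Finset ℤ) (q : ℤ),
      ∃ W : lampGraph.Walk (A, q) (symmDiff A (X ∩ Finset.Icc q (q + n)), q + n),
        W.length ≤ n + (X ∩ Finset.Icc q (q + n)).card ∧
        ∀ v ∈ W.support, ∃ r : ℤ, q ≤ r ∧ r ≤ q + n ∧ v.2 = r ∧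
          (v.1 = symmDiff A (X ∩ Finset.Ico q r) ∨ v.1 = symmDiff A (X ∩ Finset.Icc q r)) := by
  intro n
  induction n with
  | zero =>
    intro A q
    by_cases hq : q ∈ X
    · have h1 : X ∩ Finset.Icc q (q + ((0:ℕ):ℤ)) = {q} := by
        rw [show q + ((0:ℕ):ℤ) = q by simp]
        exact inter_Icc_self hq
      have hend : (symmDiff A {q}, q) = (symmDiff A (X ∩ Finset.Icc q (q + ((0:ℕ):ℤ))), q + ((0:ℕ):ℤ)) := by
        rw [Prod.mk.injEq, h1]
        exact ⟨rfl, by simp⟩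
      refine ⟨(Walk.cons (adj_toggle A q) Walk.nil).copy rfl hend, ?_, ?_⟩
      · rw [Walk.length_copy]
        rw [h1]
        simp
      · intro v hv
        rw [Walk.support_copy] at hv
        simp only [Walk.support_cons, Walk.support_nil, List.mem_cons, List.mem_singleton] at hv
        rcases hv with rfl | rfl | h
        · refine ⟨q, le_rfl, by simp, rfl, Or.inl ?_⟩
          rw [Finset.Ico_self, Finset.inter_empty, sd_empty]
        · refine ⟨q, le_rfl, by simp, rfl, Or.inr ?_⟩
          rw [inter_Icc_self hq]
        · exact absurd h (by simp)
    · have h1 : X ∩ Finset.Icc q (q + ((0:ℕ):ℤ)) = ∅ := by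
        rw [show q + ((0:ℕ):ℤ) = q by simp, Finset.Icc_self]
        simp [Finset.eq_empty_iff_forall_notMem, hq]
      have hend : (A, q) = (symmDiff A (X ∩ Finset.Icc q (q + ((0:ℕ):ℤ))), q + ((0:ℕ):ℤ)) := by
        rw [Prod.mk.injEq, h1, sd_empty]
        exact ⟨rfl, by simp⟩
      refine ⟨Walk.nil.copy rfl hend, ?_, ?_⟩
      · simp
      · intro v hv
        rw [Walk.support_copy] at hv
        simp only [Walk.support_nil, List.mem_singleton] at hv
        subst hv
        refine ⟨q, le_rfl, by simp, rfl, Or.inl ?_⟩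
        rw [Finset.Ico_self, Finset.inter_empty, sd_empty]
  | succ n ih =>
    intro A q
    by_cases hq : q ∈ X
    · obtain ⟨W, hlen, hsupp⟩ := ih (symmDiff A {q}) (q+1)
      have hpos : (q+1) + (n:ℤ) = q + ((n+1:ℕ):ℤ) := by push_cast; ring
      have hnot : q ∉ X ∩ Finset.Icc (q+1) ((q+1) + (n:ℤ)) := by
        simp only [Finset.mem_inter, Finset.mem_Icc]
        intro ⟨_, h, _⟩; omega
      have hIcc : X ∩ Finset.Icc q (q + ((n+1:ℕ):ℤ)) = insert q (X ∩ Finset.Icc (q+1) ((q+1) + (n:ℤ))) := by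
        rw [← hpos]
        exact insert_inter_Icc hq (by omega)
      have hA : symmDiff A (X ∩ Finset.Icc q (q + ((n+1:ℕ):ℤ)))
          = symmDiff (symmDiff A {q}) (X ∩ Finset.Icc (q+1) ((q+1) + (n:ℤ))) := by
        rw [hIcc, symmDiff_insert _ _ _ hnot]
      have hend : ((symmDiff (symmDiff A {q}) (X ∩ Finset.Icc (q+1) ((q+1) + (n:ℤ)))), (q+1) + (n:ℤ))
          = (symmDiff A (X ∩ Finset.Icc q (q + ((n+1:ℕ):ℤ))), q + ((n+1:ℕ):ℤ)) := by
        rw [Prod.mk.injEq]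
        exact ⟨hA.symm, hpos⟩
      refine ⟨(Walk.cons (adj_toggle A q) (Walk.cons (adj_right (symmDiff A {q}) q) W)).copy rfl hend, ?_, ?_⟩
      · rw [Walk.length_copy, Walk.length_cons, Walk.length_cons]
        rw [hIcc, Finset.card_insert_of_notMem hnot]
        omega
      · intro v hv
        rw [Walk.support_copy] at hv
        simp only [Walk.support_cons, List.mem_cons] at hv
        rcases hv with rfl | rfl | hv
        · refine ⟨q, le_rfl, by push_cast; omega, rfl, Or.inl ?_⟩
          rw [Finset.Ico_self, Finset.inter_empty, sd_empty]
        · refine ⟨q, le_rfl, by push_cast; omega, rfl, Or.inr ?_⟩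
          rw [inter_Icc_self hq]
        · obtain ⟨r, hr1, hr2, hv2, hform⟩ := hsupp v hv
          refine ⟨r, by omega, by push_cast at hr2 ⊢; omega, hv2, ?_⟩
          rcases hform with h | h
          · left
            rw [h, insert_inter_Ico hq (by omega), symmDiff_insert _ _ _ (by
              simp only [Finset.mem_inter, Finset.mem_Ico]; intro ⟨_, h', _⟩; omega)]
          · right
            rw [h, insert_inter_Icc hq (by omega), symmDiff_insert _ _ _ (by
              simp only [Finset.mem_inter, Finset.mem_Icc]; intro ⟨_, h', _⟩; omega)]
    · obtain ⟨W, hlen, hsupp⟩ := ih A (q+1)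
      have hpos : (q+1) + (n:ℤ) = q + ((n+1:ℕ):ℤ) := by push_cast; ring
      have hIcc : X ∩ Finset.Icc q (q + ((n+1:ℕ):ℤ)) = X ∩ Finset.Icc (q+1) ((q+1) + (n:ℤ)) := by
        rw [← hpos]
        exact skip_inter_Icc hq
      have hend : ((symmDiff A (X ∩ Finset.Icc (q+1) ((q+1) + (n:ℤ)))), (q+1) + (n:ℤ))
          = (symmDiff A (X ∩ Finset.Icc q (q + ((n+1:ℕ):ℤ))), q + ((n+1:ℕ):ℤ)) := by
        rw [Prod.mk.injEq, hIcc]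
        exact ⟨rfl, hpos⟩
      refine ⟨(Walk.cons (adj_right A q) W).copy rfl hend, ?_, ?_⟩
      · rw [Walk.length_copy, Walk.length_cons, hIcc]
        omega
      · intro v hv
        rw [Walk.support_copy] at hv
        simp only [Walk.support_cons, List.mem_cons] at hv
        rcases hv with rfl | hv
        · refine ⟨q, le_rfl, by push_cast; omega, rfl, Or.inl ?_⟩
          rw [Finset.Ico_self, Finset.inter_empty, sd_empty]
        · obtain ⟨r, hr1, hr2, hv2, hform⟩ := hsupp v hv
          refine ⟨r, by omega, by push_cast at hr2 ⊢; omega, hv2, ?_⟩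
          rcases hform with h | h
          · left; rw [h, skip_inter_Ico hq]
          · right; rw [h, skip_inter_Icc hq]

lemma dist_start_le (A : Finset ℤ) (r : ℤ) (h0 : 0 ≤ r) (hA : A ⊆ Finset.Icc 0 r) :
    lampGraph.dist (∅, (0:ℤ)) (A, r) ≤ r.toNat + A.card := by
  obtain ⟨W, hlen, -⟩ := sweep_exists A r.toNat ∅ 0
  have hAi : A ∩ Finset.Icc (0:ℤ) (0 + (r.toNat:ℤ)) = A := by
    rw [Finset.inter_eq_left]
    intro x hx
    have := hA hx
    simp only [Finset.mem_Icc] at this ⊢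
    omega
  have hend : ((symmDiff (∅:Finset ℤ) (A ∩ Finset.Icc (0:ℤ) (0 + (r.toNat:ℤ)))), (0:ℤ) + (r.toNat:ℤ)) = (A, r) := by
    rw [Prod.mk.injEq, hAi]
    constructor
    · simp
    · omega
  calc lampGraph.dist (∅, (0:ℤ)) (A, r) ≤ (W.copy rfl hend).length := SimpleGraph.dist_le _
    _ ≤ r.toNat + A.card := by
      rw [Walk.length_copy]
      have hc := congrArg Finset.card hAi
      omega

lemma dist_end_le (S : Finset ℤ) (p : ℤ) (A : Finset ℤ) (r : ℤ) (hrp : r ≤ p)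
    (hd : symmDiff A S ⊆ Finset.Icc r p) :
    lampGraph.dist (S, p) (A, r) ≤ (p - r).toNat + (symmDiff A S).card := by
  obtain ⟨W, hlen, -⟩ := sweep_exists (symmDiff A S) (p-r).toNat A r
  have hAi : symmDiff A S ∩ Finset.Icc r (r + ((p-r).toNat:ℤ)) = symmDiff A S := by
    rw [Finset.inter_eq_left]
    intro x hx
    have := hd hx
    simp only [Finset.mem_Icc] at this ⊢
    omega
  have hend : ((symmDiff A (symmDiff A S ∩ Finset.Icc r (r + ((p-r).toNat:ℤ)))), r + ((p-r).toNat:ℤ)) = (S, p) := by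
    rw [Prod.mk.injEq, hAi]
    constructor
    · exact symmDiff_symmDiff_cancel_left A S
    · omega
  rw [SimpleGraph.dist_comm]
  calc lampGraph.dist (A, r) (S, p) ≤ (W.copy rfl hend).length := SimpleGraph.dist_le _
    _ ≤ (p-r).toNat + (symmDiff A S).card := by
      rw [Walk.length_copy]
      have hc := congrArg Finset.card hAi
      omega

lemma adj_snd {u v : V} (h : lampGraph.Adj u v) : (u.2 - v.2).natAbs ≤ 1 := by
  rw [lampGraph, SimpleGraph.fromRel_adj] at h
  rcases h.2 with (⟨_, h2⟩ | ⟨h2, _⟩) | (⟨_, h2⟩ | ⟨h2, _⟩) <;> omega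

lemma natAbs_le_length {u v : V} (W : lampGraph.Walk u v) : (u.2 - v.2).natAbs ≤ W.length := by
  induction W with
  | nil => simp
  | @cons a b c h W ih =>
    have h1 := adj_snd h
    rw [Walk.length_cons]
    omega

end LampAux

-- appended after infra
namespace LampAux
open Finset

noncomputable def Lw (k : ℕ) : Finset ℤ := Finset.Icc 1 (k:ℤ)
noncomputable def Rw (p : ℤ) (k : ℕ) : Finset ℤ := Finset.Icc (p - k) (p - 1)
noncomputable def sig (p : ℤ) (k : ℕ) (D : Finset ℤ) : Finset ℤ := D.image (fun x => x + (p - k - 1))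
noncomputable def Ew (S : Finset ℤ) (k : ℕ) (D : Finset ℤ) : Finset ℤ := symmDiff (S ∩ Lw k) D
noncomputable def Gw (S : Finset ℤ) (p : ℤ) (k : ℕ) (D : Finset ℤ) : Finset ℤ :=
  symmDiff (S ∩ Rw p k) (sig p k D)
noncomputable def Xw (S : Finset ℤ) (p : ℤ) (k : ℕ) (D : Finset ℤ) : Finset ℤ :=
  symmDiff (symmDiff S (Ew S k D)) (Gw S p k D)
noncomputable def Yw (S : Finset ℤ) (p : ℤ) (k : ℕ) (D : Finset ℤ) : Finset ℤ :=
  symmDiff S (Gw S p k D)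
noncomputable def phiF (p : ℤ) (k : ℕ) (v : V) : Finset ℤ :=
  if v.1 ∩ Finset.Ioc v.2 p = ∅ then v.1 ∩ Lw k
  else (v.1 ∩ Rw p k).image (fun x => x - (p - k - 1))

lemma mem_sig {p : ℤ} {k : ℕ} {D : Finset ℤ} {x : ℤ} :
    x ∈ sig p k D ↔ x - (p - k - 1) ∈ D := by
  simp only [sig, Finset.mem_image]
  constructor
  · rintro ⟨a, ha, rfl⟩
    simpa using ha
  · intro h
    exact ⟨x - (p - k - 1), h, by ring⟩

lemma sig_subset {p : ℤ} {k : ℕ} {D : Finset ℤ} (hD : D ⊆ Lw k) : sig p k D ⊆ Rw p k := by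
  intro x hx
  rw [mem_sig] at hx
  have := hD hx
  simp only [Lw, Finset.mem_Icc] at this
  simp only [Rw, Finset.mem_Icc]
  omega

lemma sig_recover {p : ℤ} {k : ℕ} {D : Finset ℤ} :
    (sig p k D).image (fun x => x - (p - k - 1)) = D := by
  rw [sig, Finset.image_image]
  have h : ((fun x => x - (p - (k:ℤ) - 1)) ∘ (fun x => x + (p - (k:ℤ) - 1))) = id := by
    funext a; simp
  rw [h, Finset.image_id]

lemma sig_inj {p : ℤ} {k : ℕ} {D D' : Finset ℤ} (h : sig p k D = sig p k D') : D = D' := by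
  have := congrArg (fun s => s.image (fun x => x - (p - (k:ℤ) - 1))) h
  simpa only [sig_recover] using this

lemma Ew_subset {S : Finset ℤ} {k : ℕ} {D : Finset ℤ} (hD : D ⊆ Lw k) : Ew S k D ⊆ Lw k := by
  intro x hx
  rw [Ew, Finset.mem_symmDiff] at hx
  rcases hx with ⟨h, _⟩ | ⟨h, _⟩
  · exact (Finset.mem_inter.1 h).2
  · exact hD h

lemma Gw_subset {S : Finset ℤ} {p : ℤ} {k : ℕ} {D : Finset ℤ} (hD : D ⊆ Lw k) :
    Gw S p k D ⊆ Rw p k := by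
  intro x hx
  rw [Gw, Finset.mem_symmDiff] at hx
  rcases hx with ⟨h, _⟩ | ⟨h, _⟩
  · exact (Finset.mem_inter.1 h).2
  · exact sig_subset hD h

lemma mem_Xw {S : Finset ℤ} {p : ℤ} {k : ℕ} {D : Finset ℤ} {x : ℤ}
    (hD : D ⊆ Lw k) (hkp : 2*(k:ℤ)+1 ≤ p) :
    x ∈ Xw S p k D ↔
      (x ∈ D ∨ x ∈ sig p k D ∨ (¬(1 ≤ x ∧ x ≤ (k:ℤ)) ∧ ¬(p-k ≤ x ∧ x ≤ p-1) ∧ x ∈ S)) := by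
  have hxD : x ∈ D → (1 ≤ x ∧ x ≤ (k:ℤ)) := by
    intro h; have := hD h; simpa only [Lw, Finset.mem_Icc] using this
  have hxs : x ∈ sig p k D → (p - k ≤ x ∧ x ≤ p - 1) := by
    intro h; have := sig_subset hD h; simpa only [Rw, Finset.mem_Icc] using this
  simp only [Xw, Ew, Gw, Lw, Rw, Finset.mem_symmDiff, Finset.mem_inter, Finset.mem_Icc]
  by_cases h1 : x ∈ S <;> by_cases h2 : x ∈ D <;> by_cases h3 : x ∈ sig p k D <;>
    simp only [h1, h2, h3, true_and, and_true, false_and, and_false, not_true_eq_false,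
      not_false_eq_true, true_or, or_true, false_or, or_false, iff_true, iff_false,
      not_and, not_or, not_not] <;>
    first
      | omega
      | (have := hxD h2; omega)
      | (have := hxs h3; omega)
      | (have := hxD h2; have := hxs h3; omega)

lemma mem_Yw {S : Finset ℤ} {p : ℤ} {k : ℕ} {D : Finset ℤ} {x : ℤ}
    (hD : D ⊆ Lw k) :
    x ∈ Yw S p k D ↔ (x ∈ sig p k D ∨ (¬(p-k ≤ x ∧ x ≤ p-1) ∧ x ∈ S)) := by
  have hxs : x ∈ sig p k D → (p - k ≤ x ∧ x ≤ p - 1) := by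
    intro h; have := sig_subset hD h; simpa only [Rw, Finset.mem_Icc] using this
  simp only [Yw, Gw, Rw, Finset.mem_symmDiff, Finset.mem_inter, Finset.mem_Icc]
  by_cases h1 : x ∈ S <;> by_cases h3 : x ∈ sig p k D <;>
    simp only [h1, h3, true_and, and_true, false_and, and_false, not_true_eq_false,
      not_false_eq_true, true_or, or_true, false_or, or_false, iff_true, iff_false,
      not_and, not_or, not_not] <;>
    first
      | omega
      | (have := hxs h3; omega)
      | tauto

lemma Xw_symmDiff_Ew {S : Finset ℤ} {p : ℤ} {k : ℕ} {D : Finset ℤ} :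
    symmDiff (Xw S p k D) (Ew S k D) = Yw S p k D := by
  rw [Xw, Yw, symmDiff_right_comm, symmDiff_symmDiff_cancel_right]

lemma Xw_symmDiff_EGw {S : Finset ℤ} {p : ℤ} {k : ℕ} {D : Finset ℤ} :
    symmDiff (symmDiff (Xw S p k D) (Ew S k D)) (Gw S p k D) = S := by
  rw [Xw_symmDiff_Ew, Yw, symmDiff_symmDiff_cancel_right]

end LampAux

namespace LampAux
open Finset

lemma sd_empty_left (t : Finset ℤ) : symmDiff (∅ : Finset ℤ) t = t := by
  ext x; simp [Finset.mem_symmDiff]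

lemma card_Lw (k : ℕ) : (Lw k).card = k := by
  rw [Lw, Int.card_Icc]; omega

lemma card_Rw (p : ℤ) (k : ℕ) (hkp : 2*(k:ℤ)+1 ≤ p) : (Rw p k).card = k := by
  rw [Rw, Int.card_Icc]; omega

set_option maxHeartbeats 1000000 in
lemma walk_spec (S : Finset ℤ) (p : ℤ) (k : ℕ) (D : Finset ℤ)
    (hS : S ⊆ Finset.Icc 0 p) (hD : D ⊆ Lw k) (hkp : 2*(k:ℤ)+1 ≤ p) :
    ∃ W : lampGraph.Walk (∅, (0:ℤ)) (S, p),
      W.length ≤ 6 * p.toNat ∧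
      (Yw S p k D, (0:ℤ)) ∈ W.support ∧
      ∀ v ∈ W.support, ∃ r : ℤ, 0 ≤ r ∧ r ≤ p ∧ v.2 = r ∧
        (v.1 = Xw S p k D ∩ Finset.Ico 0 r ∨ v.1 = Xw S p k D ∩ Finset.Icc 0 r ∨
         v.1 = symmDiff (Xw S p k D) (Ew S k D ∩ Finset.Icc r p) ∨
         v.1 = symmDiff (Xw S p k D) (Ew S k D ∩ Finset.Ioc r p) ∨
         v.1 = symmDiff S (Gw S p k D ∩ Finset.Icc r p) ∨
         v.1 = symmDiff S (Gw S p k D ∩ Finset.Ioc r p)) := by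
  set X := Xw S p k D with hXdef
  set E := Ew S k D with hEdef
  set G := Gw S p k D with hGdef
  set n := p.toNat with hndef
  have hn : ((n : ℕ) : ℤ) = p := Int.toNat_of_nonneg (by omega)
  have hEL : E ⊆ Lw k := Ew_subset hD
  have hGR : G ⊆ Rw p k := Gw_subset hD
  have hEb : ∀ x ∈ E, 1 ≤ x ∧ x ≤ (k:ℤ) := by
    intro x hx; have := hEL hx; simpa only [Lw, Finset.mem_Icc] using this
  have hGb : ∀ x ∈ G, p - k ≤ x ∧ x ≤ p - 1 := by
    intro x hx; have := hGR hx; simpa only [Rw, Finset.mem_Icc] using this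
  have hSb : ∀ x ∈ S, 0 ≤ x ∧ x ≤ p := by
    intro x hx; have := hS hx; simpa only [Finset.mem_Icc] using this
  have hXsub : X ⊆ Finset.Icc 0 p := by
    intro x hx
    rcases (mem_Xw hD hkp).1 hx with h | h | ⟨_, _, h⟩
    · have := hD h; simp only [Lw, Finset.mem_Icc] at this ⊢; omega
    · have := sig_subset hD h; simp only [Rw, Finset.mem_Icc] at this ⊢; omega
    · exact hS h
  have hXb : ∀ x ∈ X, 0 ≤ x ∧ x ≤ p := by
    intro x hx; have := hXsub hx; simpa only [Finset.mem_Icc] using this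
  have hEsub : E ⊆ Finset.Icc 0 p := by
    intro x hx; have := hEb x hx; simp only [Finset.mem_Icc]; omega
  have hGsub : G ⊆ Finset.Icc 0 p := by
    intro x hx; have := hGb x hx; simp only [Finset.mem_Icc]; omega
  -- phase B
  obtain ⟨WB, hBlen, hBsupp⟩ := sweep_exists X n ∅ 0
  have hXi : X ∩ Finset.Icc (0:ℤ) (0 + (n:ℤ)) = X := by
    rw [Finset.inter_eq_left]
    intro x hx; have := hXb x hx; simp only [Finset.mem_Icc]; omega
  have hBend : (symmDiff (∅ : Finset ℤ) (X ∩ Finset.Icc (0:ℤ) (0 + (n:ℤ))), (0:ℤ) + (n:ℤ)) = (X, p) := by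
    rw [Prod.mk.injEq, hXi, sd_empty_left]
    exact ⟨rfl, by omega⟩
  -- phase C (reversed)
  obtain ⟨WC, hClen, hCsupp⟩ := sweep_exists E n (symmDiff X E) 0
  have hEi : E ∩ Finset.Icc (0:ℤ) (0 + (n:ℤ)) = E := by
    rw [Finset.inter_eq_left]
    intro x hx; have := hEb x hx; simp only [Finset.mem_Icc]; omega
  have hCend : (symmDiff (symmDiff X E) (E ∩ Finset.Icc (0:ℤ) (0 + (n:ℤ))), (0:ℤ) + (n:ℤ)) = (X, p) := by
    rw [Prod.mk.injEq, hEi, symmDiff_symmDiff_cancel_right]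
    exact ⟨rfl, by omega⟩
  -- phase D
  obtain ⟨WD, hDlen, hDsupp⟩ := sweep_exists G n (symmDiff X E) 0
  have hGi : G ∩ Finset.Icc (0:ℤ) (0 + (n:ℤ)) = G := by
    rw [Finset.inter_eq_left]
    intro x hx; have := hGb x hx; simp only [Finset.mem_Icc]; omega
  have hDend : (symmDiff (symmDiff X E) (G ∩ Finset.Icc (0:ℤ) (0 + (n:ℤ))), (0:ℤ) + (n:ℤ)) = (S, p) := by
    rw [Prod.mk.injEq, hGi, Xw_symmDiff_EGw]
    exact ⟨rfl, by omega⟩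
  refine ⟨((WB.copy rfl hBend).append (WC.copy rfl hCend).reverse).append (WD.copy rfl hDend),
    ?_, ?_, ?_⟩
  · -- length
    rw [Walk.length_append, Walk.length_append, Walk.length_reverse,
      Walk.length_copy, Walk.length_copy, Walk.length_copy]
    have hcX := congrArg Finset.card hXi
    have hcE := congrArg Finset.card hEi
    have hcG := congrArg Finset.card hGi
    have hcardE : E.card ≤ k := le_trans (Finset.card_le_card hEL) (le_of_eq (card_Lw k))
    have hcardG : G.card ≤ k := le_trans (Finset.card_le_card hGR) (le_of_eq (card_Rw p k hkp))
    have hcardS : S.card ≤ n + 1 := by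
      have := Finset.card_le_card hS
      rw [Int.card_Icc] at this
      omega
    have hXuni : X ⊆ (S ∪ E) ∪ G := by
      intro x hx
      rw [hXdef, Xw, Finset.mem_symmDiff] at hx
      simp only [Finset.mem_union, hEdef, hGdef]
      rcases hx with ⟨h, -⟩ | ⟨h, -⟩
      · rw [Finset.mem_symmDiff] at h
        rcases h with ⟨h, -⟩ | ⟨h, -⟩
        · exact Or.inl (Or.inl h)
        · exact Or.inl (Or.inr h)
      · exact Or.inr h
    have hcardX : X.card ≤ S.card + E.card + G.card := by
      calc X.card ≤ ((S ∪ E) ∪ G).card := Finset.card_le_card hXuni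
        _ ≤ (S ∪ E).card + G.card := Finset.card_union_le _ _
        _ ≤ S.card + E.card + G.card := by
            have := Finset.card_union_le S E
            omega
    have hkn : 2 * k + 1 ≤ n := by omega
    omega
  · -- (Yw, 0) in support
    rw [Walk.mem_support_append_iff]
    right
    rw [Walk.support_copy]
    rw [← Xw_symmDiff_Ew (S := S) (p := p) (k := k) (D := D)]
    exact Walk.start_mem_support WD
  · -- support forms
    intro v hv
    rw [Walk.mem_support_append_iff, Walk.mem_support_append_iff] at hv
    have hc1 : ∀ r : ℤ, symmDiff (symmDiff X E) (E ∩ Finset.Ico 0 r)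
        = symmDiff X (E ∩ Finset.Icc r p) := by
      intro r; ext x
      by_cases h2 : x ∈ E
      · have hb := hEb x h2
        simp only [Finset.mem_symmDiff, Finset.mem_inter, Finset.mem_Ico, Finset.mem_Icc]
        by_cases h1 : x ∈ X <;> simp [h1, h2] <;> omega
      · simp only [Finset.mem_symmDiff, Finset.mem_inter, Finset.mem_Ico, Finset.mem_Icc]
        by_cases h1 : x ∈ X <;> simp [h1, h2]
    have hc2 : ∀ r : ℤ, symmDiff (symmDiff X E) (E ∩ Finset.Icc 0 r)
        = symmDiff X (E ∩ Finset.Ioc r p) := by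
      intro r; ext x
      by_cases h2 : x ∈ E
      · have hb := hEb x h2
        simp only [Finset.mem_symmDiff, Finset.mem_inter, Finset.mem_Ioc, Finset.mem_Icc]
        by_cases h1 : x ∈ X <;> simp [h1, h2] <;> omega
      · simp only [Finset.mem_symmDiff, Finset.mem_inter, Finset.mem_Ioc, Finset.mem_Icc]
        by_cases h1 : x ∈ X <;> simp [h1, h2]
    have hXES : symmDiff X E = symmDiff S G := Xw_symmDiff_Ew
    have hd1 : ∀ r : ℤ, symmDiff (symmDiff X E) (G ∩ Finset.Ico 0 r)
        = symmDiff S (G ∩ Finset.Icc r p) := by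
      intro r; rw [hXES]; ext x
      by_cases h2 : x ∈ G
      · have hb := hGb x h2
        simp only [Finset.mem_symmDiff, Finset.mem_inter, Finset.mem_Ico, Finset.mem_Icc]
        by_cases h1 : x ∈ S <;> simp [h1, h2] <;> omega
      · simp only [Finset.mem_symmDiff, Finset.mem_inter, Finset.mem_Ico, Finset.mem_Icc]
        by_cases h1 : x ∈ S <;> simp [h1, h2]
    have hd2 : ∀ r : ℤ, symmDiff (symmDiff X E) (G ∩ Finset.Icc 0 r)
        = symmDiff S (G ∩ Finset.Ioc r p) := by
      intro r; rw [hXES]; ext x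
      by_cases h2 : x ∈ G
      · have hb := hGb x h2
        simp only [Finset.mem_symmDiff, Finset.mem_inter, Finset.mem_Ioc, Finset.mem_Icc]
        by_cases h1 : x ∈ S <;> simp [h1, h2] <;> omega
      · simp only [Finset.mem_symmDiff, Finset.mem_inter, Finset.mem_Ioc, Finset.mem_Icc]
        by_cases h1 : x ∈ S <;> simp [h1, h2]
    rcases hv with (hv | hv) | hv
    · rw [Walk.support_copy] at hv
      obtain ⟨r, h0r, hrn, hv2, hform⟩ := hBsupp v hv
      refine ⟨r, by omega, by omega, hv2, ?_⟩
      rcases hform with h | h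
      · left; rw [h, sd_empty_left]
      · right; left; rw [h, sd_empty_left]
    · rw [Walk.support_reverse, List.mem_reverse, Walk.support_copy] at hv
      obtain ⟨r, h0r, hrn, hv2, hform⟩ := hCsupp v hv
      refine ⟨r, by omega, by omega, hv2, ?_⟩
      rcases hform with h | h
      · right; right; left; rw [h, hc1 r]
      · right; right; right; left; rw [h, hc2 r]
    · rw [Walk.support_copy] at hv
      obtain ⟨r, h0r, hrn, hv2, hform⟩ := hDsupp v hv
      refine ⟨r, by omega, by omega, hv2, ?_⟩
      rcases hform with h | h
      · right; right; right; right; left; rw [h, hd1 r]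
      · right; right; right; right; right; rw [h, hd2 r]

end LampAux

namespace LampAux
open Finset

set_option maxHeartbeats 1000000 in
lemma phi_C_case (S : Finset ℤ) (p : ℤ) (k : ℕ) (D : Finset ℤ)
    (hD : D ⊆ Lw k) (hkp : 2*(k:ℤ)+1 ≤ p)
    (hok : p ∈ S ∨ D ≠ ∅) (A : Finset ℤ) (r : ℤ) (hrp : r ≤ p)
    (I : Finset ℤ) (hI₁ : ∀ x ∈ I, r ≤ x ∧ x ≤ p)
    (hA : A = symmDiff (Xw S p k D) (Ew S k D ∩ I)) :
    phiF p k (A, r) = D := by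
  have hDb : ∀ x ∈ D, 1 ≤ x ∧ x ≤ (k:ℤ) := by
    intro x hx; have := hD hx; simpa only [Lw, Finset.mem_Icc] using this
  have hsb : ∀ x ∈ sig p k D, p - k ≤ x ∧ x ≤ p - 1 := by
    intro x hx; have := sig_subset hD hx; simpa only [Rw, Finset.mem_Icc] using this
  have hEb : ∀ x ∈ Ew S k D, 1 ≤ x ∧ x ≤ (k:ℤ) := by
    intro x hx; have := Ew_subset hD hx; simpa only [Lw, Finset.mem_Icc] using this
  have hpX : p ∈ Xw S p k D ↔ p ∈ S := by
    rw [mem_Xw hD hkp]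
    constructor
    · rintro (h | h | ⟨-, -, h⟩)
      · have := hDb p h; omega
      · have := hsb p h; omega
      · exact h
    · intro h
      exact Or.inr (Or.inr ⟨by omega, by omega, h⟩)
  have hARg : A ∩ Rw p k = sig p k D := by
    ext x
    simp only [hA, Finset.mem_inter, Finset.mem_symmDiff, Rw, Finset.mem_Icc, mem_Xw hD hkp]
    constructor
    · rintro ⟨h, hb1, hb2⟩
      rcases h with ⟨hX, hnE⟩ | ⟨⟨hE, hIx⟩, hnX⟩
      · rcases hX with h | h | ⟨h5, h6, -⟩
        · have := hDb x h; omega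
        · exact h
        · omega
      · have := hEb x hE; omega
    · intro hx
      have hb := hsb x hx
      refine ⟨Or.inl ⟨Or.inr (Or.inl hx), ?_⟩, by omega, by omega⟩
      rintro ⟨hE, -⟩
      have := hEb x hE; omega
  by_cases hio : A ∩ Finset.Ioc r p = ∅
  · have hrk : (k:ℤ) + 1 ≤ r := by
      rcases hok with hpS | hDne
      · have hpA : p ∈ A := by
          rw [hA, Finset.mem_symmDiff]
          left
          refine ⟨hpX.mpr hpS, ?_⟩
          rintro hmem
          have := hEb p (Finset.mem_of_mem_inter_left hmem)
          omega
        have hpnot : ¬(r < p) := by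
          intro hlt
          rw [Finset.eq_empty_iff_forall_notMem] at hio
          exact hio p (Finset.mem_inter.mpr ⟨hpA, by simp only [Finset.mem_Ioc]; omega⟩)
        omega
      · obtain ⟨x, hxD⟩ := Finset.nonempty_of_ne_empty hDne
        have hysig : (x + (p - k - 1)) ∈ sig p k D := mem_sig.mpr (by simpa using hxD)
        have hyA : (x + (p - k - 1)) ∈ A := by
          have h2 : (x + (p - k - 1)) ∈ A ∩ Rw p k := by rw [hARg]; exact hysig
          exact Finset.mem_of_mem_inter_left h2
        have hyb := hsb _ hysig
        have hxb := hDb x hxD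
        have hynot : ¬(r < x + (p - k - 1)) := by
          intro hlt
          rw [Finset.eq_empty_iff_forall_notMem] at hio
          exact hio _ (Finset.mem_inter.mpr ⟨hyA, by simp only [Finset.mem_Ioc]; omega⟩)
        omega
    have hphi : phiF p k (A, r) = A ∩ Lw k := by
      unfold phiF
      rw [if_pos hio]
    rw [hphi]
    have hEI : Ew S k D ∩ I = ∅ := by
      rw [Finset.eq_empty_iff_forall_notMem]
      rintro x hx
      rw [Finset.mem_inter] at hx
      have h1 := hEb x hx.1
      have h2 := hI₁ x hx.2
      omega
    rw [hA, hEI, sd_empty]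
    ext x
    simp only [Finset.mem_inter, Lw, Finset.mem_Icc, mem_Xw hD hkp]
    constructor
    · rintro ⟨hX, h3, h4⟩
      rcases hX with h | h | ⟨h5, h6, -⟩
      · exact h
      · have := hsb x h; omega
      · omega
    · intro hxD
      have := hDb x hxD
      exact ⟨Or.inl hxD, by omega, by omega⟩
  · have hphi : phiF p k (A, r) = (A ∩ Rw p k).image (fun x => x - (p - k - 1)) := by
      unfold phiF
      rw [if_neg hio]
    rw [hphi, hARg, sig_recover]

set_option maxHeartbeats 1000000 in
lemma phi_D_case (S : Finset ℤ) (p : ℤ) (k : ℕ) (D : Finset ℤ)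
    (hD : D ⊆ Lw k) (hkp : 2*(k:ℤ)+1 ≤ p)
    (hok : p ∈ S ∨ D ≠ ∅) (A : Finset ℤ) (r : ℤ) (hrp : r ≤ p)
    (I : Finset ℤ) (hI₁ : ∀ x ∈ I, r ≤ x ∧ x ≤ p) (hI₂ : ∀ x, r < x → x ≤ p → x ∈ I)
    (hA : A = symmDiff S (Gw S p k D ∩ I)) :
    phiF p k (A, r) = D ∨ lampGraph.dist (S, p) (A, r) ≤ 2*k := by
  have hDb : ∀ x ∈ D, 1 ≤ x ∧ x ≤ (k:ℤ) := by
    intro x hx; have := hD hx; simpa only [Lw, Finset.mem_Icc] using this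
  have hsb : ∀ x ∈ sig p k D, p - k ≤ x ∧ x ≤ p - 1 := by
    intro x hx; have := sig_subset hD hx; simpa only [Rw, Finset.mem_Icc] using this
  have hGb : ∀ x ∈ Gw S p k D, p - k ≤ x ∧ x ≤ p - 1 := by
    intro x hx; have := Gw_subset hD hx; simpa only [Rw, Finset.mem_Icc] using this
  by_cases hrpk : p - k ≤ r
  · right
    have hAS : symmDiff A S = Gw S p k D ∩ I := by
      rw [hA, symmDiff_comm, symmDiff_symmDiff_cancel_left]
    have hsub : symmDiff A S ⊆ Finset.Icc r p := by
      rw [hAS]; intro x hx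
      have := hI₁ x (Finset.mem_of_mem_inter_right hx)
      simp only [Finset.mem_Icc]; omega
    have hcard : (symmDiff A S).card ≤ k := by
      rw [hAS]
      calc (Gw S p k D ∩ I).card ≤ (Gw S p k D).card :=
            Finset.card_le_card Finset.inter_subset_left
        _ ≤ (Rw p k).card := Finset.card_le_card (Gw_subset hD)
        _ = k := card_Rw p k hkp
    have := dist_end_le S p A r hrp hsub
    omega
  · left
    have hGI : Gw S p k D ∩ I = Gw S p k D := by
      rw [Finset.inter_eq_left]
      intro x hx
      have := hGb x hx
      exact hI₂ x (by omega) (by omega)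
    have hAY : A = Yw S p k D := by rw [hA, hGI]; rfl
    have hARg : A ∩ Rw p k = sig p k D := by
      ext x
      simp only [hAY, Finset.mem_inter, Rw, Finset.mem_Icc, mem_Yw hD]
      constructor
      · rintro ⟨h | ⟨hn, hxS⟩, h1, h2⟩
        · exact h
        · exact absurd ⟨h1, h2⟩ hn
      · intro hx
        have := hsb x hx
        exact ⟨Or.inl hx, by omega, by omega⟩
    have hio : ¬(A ∩ Finset.Ioc r p = ∅) := by
      rcases hok with hpS | hDne
      · have hpA : p ∈ A := by
          rw [hAY, mem_Yw hD]
          right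
          exact ⟨by omega, hpS⟩
        intro hcon
        rw [Finset.eq_empty_iff_forall_notMem] at hcon
        exact hcon p (Finset.mem_inter.mpr ⟨hpA, by simp only [Finset.mem_Ioc]; omega⟩)
      · obtain ⟨x, hxD⟩ := Finset.nonempty_of_ne_empty hDne
        have hysig : (x + (p - k - 1)) ∈ sig p k D := mem_sig.mpr (by simpa using hxD)
        have hyA : (x + (p - k - 1)) ∈ A := by
          rw [hAY, mem_Yw hD]; exact Or.inl hysig
        have hyb := hsb _ hysig
        have hxb := hDb x hxD
        intro hcon
        rw [Finset.eq_empty_iff_forall_notMem] at hcon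
        exact hcon _ (Finset.mem_inter.mpr ⟨hyA, by simp only [Finset.mem_Ioc]; omega⟩)
    have hphi : phiF p k (A, r) = (A ∩ Rw p k).image (fun x => x - (p - k - 1)) := by
      unfold phiF
      rw [if_neg hio]
    rw [hphi, hARg, sig_recover]

set_option maxHeartbeats 1000000 in
lemma phi_or_near (S : Finset ℤ) (p : ℤ) (k : ℕ) (D : Finset ℤ)
    (hD : D ⊆ Lw k) (hkp : 2*(k:ℤ)+1 ≤ p)
    (hok : p ∈ S ∨ D ≠ ∅) (A : Finset ℤ) (r : ℤ) (h0r : 0 ≤ r) (hrp : r ≤ p)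
    (hform : A = Xw S p k D ∩ Finset.Ico 0 r ∨ A = Xw S p k D ∩ Finset.Icc 0 r ∨
       A = symmDiff (Xw S p k D) (Ew S k D ∩ Finset.Icc r p) ∨
       A = symmDiff (Xw S p k D) (Ew S k D ∩ Finset.Ioc r p) ∨
       A = symmDiff S (Gw S p k D ∩ Finset.Icc r p) ∨
       A = symmDiff S (Gw S p k D ∩ Finset.Ioc r p)) :
    phiF p k (A, r) = D ∨ lampGraph.dist (∅, (0:ℤ)) (A, r) ≤ 2*k
      ∨ lampGraph.dist (S, p) (A, r) ≤ 2*k := by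
  have hDb : ∀ x ∈ D, 1 ≤ x ∧ x ≤ (k:ℤ) := by
    intro x hx; have := hD hx; simpa only [Lw, Finset.mem_Icc] using this
  have hsb : ∀ x ∈ sig p k D, p - k ≤ x ∧ x ≤ p - 1 := by
    intro x hx; have := sig_subset hD hx; simpa only [Rw, Finset.mem_Icc] using this
  rcases hform with hA | hA | hA | hA | hA | hA
  · -- B phase, Ico form
    by_cases hrk : r ≤ (k:ℤ)
    · right; left
      have hsub : A ⊆ Finset.Icc 0 r := by
        rw [hA]; intro x hx
        simp only [Finset.mem_inter, Finset.mem_Ico] at hx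
        simp only [Finset.mem_Icc]; omega
      have hcard : A.card ≤ r.toNat := by
        rw [hA]
        calc (Xw S p k D ∩ Finset.Ico 0 r).card ≤ (Finset.Ico 0 r).card :=
              Finset.card_le_card Finset.inter_subset_right
          _ = r.toNat := by rw [Int.card_Ico]; omega
      have := dist_start_le A r h0r hsub
      omega
    · left
      have hio : A ∩ Finset.Ioc r p = ∅ := by
        rw [Finset.eq_empty_iff_forall_notMem]
        intro x hx
        rw [hA] at hx
        simp only [Finset.mem_inter, Finset.mem_Ico, Finset.mem_Ioc] at hx
        omega
      have hphi : phiF p k (A, r) = A ∩ Lw k := by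
        unfold phiF
        rw [if_pos hio]
      rw [hphi]
      ext x
      simp only [hA, Finset.mem_inter, Finset.mem_Ico, Lw, Finset.mem_Icc, mem_Xw hD hkp]
      constructor
      · rintro ⟨⟨hX, h1, h2⟩, h3, h4⟩
        rcases hX with h | h | ⟨h5, h6, -⟩
        · exact h
        · have := hsb x h; omega
        · omega
      · intro hxD
        have := hDb x hxD
        exact ⟨⟨Or.inl hxD, by omega, by omega⟩, by omega, by omega⟩
  · -- B phase, Icc form
    by_cases hrk : r ≤ (k:ℤ) - 1
    · right; left
      have hsub : A ⊆ Finset.Icc 0 r := by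
        rw [hA]; intro x hx
        exact Finset.mem_of_mem_inter_right hx
      have hcard : A.card ≤ r.toNat + 1 := by
        rw [hA]
        calc (Xw S p k D ∩ Finset.Icc 0 r).card ≤ (Finset.Icc 0 r).card :=
              Finset.card_le_card Finset.inter_subset_right
          _ = r.toNat + 1 := by rw [Int.card_Icc]; omega
      have := dist_start_le A r h0r hsub
      omega
    · left
      have hio : A ∩ Finset.Ioc r p = ∅ := by
        rw [Finset.eq_empty_iff_forall_notMem]
        intro x hx
        rw [hA] at hx
        simp only [Finset.mem_inter, Finset.mem_Icc, Finset.mem_Ioc] at hx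
        omega
      have hphi : phiF p k (A, r) = A ∩ Lw k := by
        unfold phiF
        rw [if_pos hio]
      rw [hphi]
      ext x
      simp only [hA, Finset.mem_inter, Lw, Finset.mem_Icc, mem_Xw hD hkp]
      constructor
      · rintro ⟨⟨hX, h1, h2⟩, h3, h4⟩
        rcases hX with h | h | ⟨h5, h6, -⟩
        · exact h
        · have := hsb x h; omega
        · omega
      · intro hxD
        have := hDb x hxD
        exact ⟨⟨Or.inl hxD, by omega, by omega⟩, by omega, by omega⟩
  · exact Or.inl (phi_C_case S p k D hD hkp hok A r hrp (Finset.Icc r p)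
      (by intro x hx; simp only [Finset.mem_Icc] at hx; omega) hA)
  · exact Or.inl (phi_C_case S p k D hD hkp hok A r hrp (Finset.Ioc r p)
      (by intro x hx; simp only [Finset.mem_Ioc] at hx; omega) hA)
  · rcases phi_D_case S p k D hD hkp hok A r hrp (Finset.Icc r p)
      (by intro x hx; simp only [Finset.mem_Icc] at hx; omega)
      (by intro x h1 h2; simp only [Finset.mem_Icc]; omega) hA with h | h
    · exact Or.inl h
    · exact Or.inr (Or.inr h)
  · rcases phi_D_case S p k D hD hkp hok A r hrp (Finset.Ioc r p)
      (by intro x hx; simp only [Finset.mem_Ioc] at hx; omega)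
      (by intro x h1 h2; simp only [Finset.mem_Ioc]; omega) hA with h | h
    · exact Or.inl h
    · exact Or.inr (Or.inr h)

end LampAux

namespace LampAux
open Finset

lemma Yw_inter_Rw {S : Finset ℤ} {p : ℤ} {k : ℕ} {D : Finset ℤ} (hD : D ⊆ Lw k) :
    Yw S p k D ∩ Rw p k = sig p k D := by
  have hsb : ∀ x ∈ sig p k D, p - k ≤ x ∧ x ≤ p - 1 := by
    intro x hx; have := sig_subset hD hx; simpa only [Rw, Finset.mem_Icc] using this
  ext x
  simp only [Finset.mem_inter, Rw, Finset.mem_Icc, mem_Yw hD]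
  constructor
  · rintro ⟨h | ⟨hn, hxS⟩, h1, h2⟩
    · exact h
    · exact absurd ⟨h1, h2⟩ hn
  · intro hx
    have := hsb x hx
    exact ⟨Or.inl hx, by omega, by omega⟩

set_option maxHeartbeats 1000000 in
lemma inj_aux (S : Finset ℤ) (p : ℤ) (k : ℕ) (D D' : Finset ℤ)
    (hD : D ⊆ Lw k) (hD' : D' ⊆ Lw k) (hkp : 2*(k:ℤ)+1 ≤ p)
    (hok : p ∈ S ∨ D ≠ ∅)
    (hform : Yw S p k D = Xw S p k D' ∩ Finset.Ico 0 (0:ℤ) ∨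
       Yw S p k D = Xw S p k D' ∩ Finset.Icc 0 (0:ℤ) ∨
       Yw S p k D = symmDiff (Xw S p k D') (Ew S k D' ∩ Finset.Icc (0:ℤ) p) ∨
       Yw S p k D = symmDiff (Xw S p k D') (Ew S k D' ∩ Finset.Ioc (0:ℤ) p) ∨
       Yw S p k D = symmDiff S (Gw S p k D' ∩ Finset.Icc (0:ℤ) p) ∨
       Yw S p k D = symmDiff S (Gw S p k D' ∩ Finset.Ioc (0:ℤ) p)) :
    D = D' := by
  have hDb : ∀ x ∈ D, 1 ≤ x ∧ x ≤ (k:ℤ) := by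
    intro x hx; have := hD hx; simpa only [Lw, Finset.mem_Icc] using this
  have hsb : ∀ x ∈ sig p k D, p - k ≤ x ∧ x ≤ p - 1 := by
    intro x hx; have := sig_subset hD hx; simpa only [Rw, Finset.mem_Icc] using this
  -- a "big" element of Yw D
  have hz : ∃ z, z ∈ Yw S p k D ∧ p - k ≤ z := by
    rcases hok with hpS | hDne
    · exact ⟨p, (mem_Yw hD).mpr (Or.inr ⟨by omega, hpS⟩), by omega⟩
    · obtain ⟨x, hxD⟩ := Finset.nonempty_of_ne_empty hDne
      have hysig : (x + (p - k - 1)) ∈ sig p k D := mem_sig.mpr (by simpa using hxD)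
      have := hsb _ hysig
      exact ⟨_, (mem_Yw hD).mpr (Or.inl hysig), by omega⟩
  obtain ⟨z, hzY, hzb⟩ := hz
  have hEi : ∀ (D₀ : Finset ℤ), D₀ ⊆ Lw k → ∀ I : Finset ℤ,
      (∀ x, 1 ≤ x → x ≤ (k:ℤ) → x ∈ I) → Ew S k D₀ ∩ I = Ew S k D₀ := by
    intro D₀ hD₀ I hI
    rw [Finset.inter_eq_left]
    intro x hx
    have := Ew_subset hD₀ hx
    simp only [Lw, Finset.mem_Icc] at this
    exact hI x this.1 this.2
  have hGi : ∀ (D₀ : Finset ℤ), D₀ ⊆ Lw k → ∀ I : Finset ℤ,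
      (∀ x, p - k ≤ x → x ≤ p - 1 → x ∈ I) → Gw S p k D₀ ∩ I = Gw S p k D₀ := by
    intro D₀ hD₀ I hI
    rw [Finset.inter_eq_left]
    intro x hx
    have := Gw_subset hD₀ hx
    simp only [Rw, Finset.mem_Icc] at this
    exact hI x this.1 this.2
  have key : Yw S p k D = Yw S p k D' → D = D' := by
    intro h
    have := congrArg (fun t => t ∩ Rw p k) h
    simp only [Yw_inter_Rw hD, Yw_inter_Rw hD'] at this
    exact sig_inj this
  rcases hform with h | h | h | h | h | h
  · exfalso
    rw [h] at hzY
    have := Finset.mem_of_mem_inter_right hzY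
    simp only [Finset.mem_Ico] at this
    omega
  · exfalso
    rw [h] at hzY
    have := Finset.mem_of_mem_inter_right hzY
    simp only [Finset.mem_Icc] at this
    omega
  · apply key
    rw [h, hEi D' hD' _ (fun x h1 h2 => by simp only [Finset.mem_Icc]; omega),
      Xw_symmDiff_Ew]
  · apply key
    rw [h, hEi D' hD' _ (fun x h1 h2 => by simp only [Finset.mem_Ioc]; omega),
      Xw_symmDiff_Ew]
  · apply key
    rw [h, hGi D' hD' _ (fun x h1 h2 => by simp only [Finset.mem_Icc]; omega)]
    rfl
  · apply key
    rw [h, hGi D' hD' _ (fun x h1 h2 => by simp only [Finset.mem_Ioc]; omega)]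
    rfl

end LampAux

open LampAux

set_option maxHeartbeats 1000000

/-- for every vertex (S,p) with S ⊆ [0,p], the vertices (∅,0) and
(S,p) of the lamplighter graph are exponentially (2^{1/4},6)-connected. -/
theorem stmt_7 (S : Finset ℤ) (p : ℤ) (hp : 0 ≤ p) (hS : S ⊆ Finset.Icc 0 p) :
    ∀ R : ℝ, 6 ≤ R → R < (lampGraph.dist (∅, 0) (S, p) : ℝ) / 2 →
      ∃ (N : ℕ) (α : Fin N → lampGraph.Walk (∅, (0 : ℤ)) (S, p)),
        (((2 : ℝ) ^ ((1 : ℝ) / 4)) ^ R ≤ (N : ℝ)) ∧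
        Function.Injective α ∧
        (∀ i, ((α i).length : ℝ) ≤ 6 * (lampGraph.dist (∅, 0) (S, p) : ℝ)) ∧
        (∀ i j, i ≠ j → ∀ v : Finset ℤ × ℤ,
          v ∈ (α i).support → v ∈ (α j).support →
          (lampGraph.dist (∅, 0) v : ℝ) ≤ R ∨ (lampGraph.dist (S, p) v : ℝ) ≤ R) := by
  intro R hR6 hRd
  classical
  set d : ℕ := lampGraph.dist (∅, (0:ℤ)) (S, p) with hd
  -- distance upper bound
  have hdub : d ≤ p.toNat + S.card := by
    have h1 := dist_end_le S p ∅ 0 hp (by rw [sd_empty_left]; exact hS)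
    rw [sd_empty_left] at h1
    rw [hd, SimpleGraph.dist_comm]
    simpa using h1
  -- reachability and distance lower bound
  have hreach : lampGraph.Reachable (∅, (0:ℤ)) (S, p) := by
    obtain ⟨W, -, -⟩ := sweep_exists S p.toNat ∅ 0
    have hend : (symmDiff (∅:Finset ℤ) (S ∩ Finset.Icc (0:ℤ) (0 + (p.toNat:ℤ))), (0:ℤ) + (p.toNat:ℤ)) = (S, p) := by
      rw [Prod.mk.injEq, sd_empty_left]
      constructor
      · rw [Finset.inter_eq_left]
        intro x hx
        have := hS hx
        simp only [Finset.mem_Icc] at this ⊢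
        omega
      · omega
    exact ⟨W.copy rfl hend⟩
  have hdlb : p.toNat ≤ d := by
    obtain ⟨Wd, hWd⟩ := hreach.exists_walk_length_eq_dist
    have h1 := natAbs_le_length Wd
    simp only at h1
    rw [hWd] at h1
    omega
  -- ceiling arithmetic
  set k0 : ℕ := ⌈R/4⌉₊ with hk0
  have hk0l : R/4 ≤ (k0:ℝ) := Nat.le_ceil _
  have hk02 : 2 ≤ k0 := by
    have h1 : (1:ℕ) < k0 := Nat.lt_ceil.mpr (by push_cast; linarith)
    omega
  have hk0low : ((k0:ℝ)) - 1 < R/4 := by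
    have h1 : (k0 - 1 : ℕ) < k0 := by omega
    have h2 := Nat.lt_ceil.mp (hk0 ▸ h1)
    have h3 : ((k0 - 1 : ℕ) : ℝ) = (k0:ℝ) - 1 := by
      push_cast [Nat.cast_sub (by omega : 1 ≤ k0)]
      ring
    linarith [h3 ▸ h2]
  have hScard : S.card ≤ p.toNat + 1 := by
    have h1 := Finset.card_le_card hS
    rw [Int.card_Icc] at h1
    omega
  have hptoNat : ((p.toNat : ℕ) : ℝ) = (p:ℝ) := by
    exact_mod_cast Int.toNat_of_nonneg hp
  have hpow : ((2:ℝ) ^ ((1:ℝ)/4)) ^ R = (2:ℝ) ^ (R/4) := by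
    rw [← Real.rpow_mul (by norm_num : (0:ℝ) ≤ 2)]
    norm_num
    ring_nf
  have hexp : (2:ℝ) ^ (R/4) ≤ (2:ℝ) ^ ((k0:ℝ)) :=
    Real.rpow_le_rpow_of_exponent_le one_le_two hk0l
  have h2k0 : (2:ℝ) ^ ((k0:ℝ)) = ((2^k0 : ℕ) : ℝ) := by
    rw [Real.rpow_natCast]
    push_cast
    ring
  have hmain : ∃ (k : ℕ) (F : Finset (Finset ℤ)), 2*(k:ℤ)+1 ≤ p ∧ (2*(k:ℝ)) ≤ R ∧
      (((2:ℝ) ^ ((1:ℝ)/4)) ^ R ≤ ((F.card : ℕ) : ℝ)) ∧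
      (∀ D ∈ F, D ⊆ Lw k ∧ (p ∈ S ∨ D ≠ ∅)) := by
    by_cases hpS : p ∈ S
    · refine ⟨k0, (Lw k0).powerset, ?_, ?_, ?_, ?_⟩
      · -- 2k0+1 ≤ p
        have hd2 : (d:ℝ) ≤ 2*(p:ℝ) + 1 := by
          have h1 : (d:ℝ) ≤ ((p.toNat:ℕ):ℝ) + ((S.card:ℕ):ℝ) := by exact_mod_cast hdub
          have h3 : ((S.card:ℕ):ℝ) ≤ (p:ℝ) + 1 := by
            have h4 : ((S.card:ℕ):ℝ) ≤ ((p.toNat + 1 : ℕ):ℝ) := by exact_mod_cast hScard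
            push_cast at h4
            linarith [hptoNat]
          linarith [hptoNat]
        have hpR : R - 1/2 < (p:ℝ) := by linarith
        rcases eq_or_lt_of_le hk02 with h2 | h3
        · have h5 : (5:ℝ) < (p:ℝ) := by linarith
          have h6 : (5:ℤ) < p := by exact_mod_cast h5
          omega
        · have h4 : 4*((k0:ℝ) - 1) < R := by linarith
          have h5 : (3:ℝ) ≤ (k0:ℝ) := by exact_mod_cast h3
          have h6 : (2*(k0:ℝ)) < (p:ℝ) := by linarith
          have h7 : (2*(k0:ℤ)) < p := by exact_mod_cast h6
          omega
      · rcases eq_or_lt_of_le hk02 with h2 | h3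
        · have h5 : (k0:ℝ) = 2 := by exact_mod_cast h2.symm
          linarith
        · have h4 : 4*((k0:ℝ) - 1) < R := by linarith
          have h5 : (3:ℝ) ≤ (k0:ℝ) := by exact_mod_cast h3
          linarith
      · rw [Finset.card_powerset, card_Lw]
        calc ((2:ℝ) ^ ((1:ℝ)/4)) ^ R = (2:ℝ) ^ (R/4) := hpow
          _ ≤ (2:ℝ) ^ ((k0:ℝ)) := hexp
          _ = ((2^k0 : ℕ) : ℝ) := h2k0
      · intro D hDF
        exact ⟨Finset.mem_powerset.mp hDF, Or.inl hpS⟩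
    · refine ⟨k0 + 1, ((Lw (k0+1)).powerset).erase ∅, ?_, ?_, ?_, ?_⟩
      · have hS' : S.card ≤ p.toNat := by
          have hsub : S ⊆ Finset.Icc 0 (p-1) := by
            intro x hx
            have h1 := hS hx
            have h2 : x ≠ p := fun h => hpS (h ▸ hx)
            simp only [Finset.mem_Icc] at h1 ⊢
            omega
          have h1 := Finset.card_le_card hsub
          rw [Int.card_Icc] at h1
          omega
        have hd2 : (d:ℝ) ≤ 2*(p:ℝ) := by
          have h1 : (d:ℝ) ≤ ((p.toNat:ℕ):ℝ) + ((S.card:ℕ):ℝ) := by exact_mod_cast hdub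
          have h3 : ((S.card:ℕ):ℝ) ≤ (p:ℝ) := by
            have h4 : ((S.card:ℕ):ℝ) ≤ ((p.toNat : ℕ):ℝ) := by exact_mod_cast hS'
            linarith [hptoNat]
          linarith [hptoNat]
        have hpR : R < (p:ℝ) := by linarith
        rcases eq_or_lt_of_le hk02 with h2 | h3
        · have h5 : (6:ℝ) < (p:ℝ) := by linarith
          have h6 : (6:ℤ) < p := by exact_mod_cast h5
          push_cast
          omega
        · have h4 : 4*((k0:ℝ) - 1) < R := by linarith
          have h5 : (3:ℝ) ≤ (k0:ℝ) := by exact_mod_cast h3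
          have h6 : (2*(k0:ℝ) + 2) < (p:ℝ) := by linarith
          have h7 : (2*(k0:ℤ) + 2) < p := by exact_mod_cast h6
          push_cast
          omega
      · rcases eq_or_lt_of_le hk02 with h2 | h3
        · have h5 : (k0:ℝ) = 2 := by exact_mod_cast h2.symm
          push_cast
          linarith
        · have h4 : 4*((k0:ℝ) - 1) < R := by linarith
          have h5 : (3:ℝ) ≤ (k0:ℝ) := by exact_mod_cast h3
          push_cast
          linarith
      · have hmem : (∅ : Finset ℤ) ∈ (Lw (k0+1)).powerset := Finset.empty_mem_powerset _
        rw [Finset.card_erase_of_mem hmem, Finset.card_powerset, card_Lw]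
        have hle : 2^k0 ≤ 2^(k0+1) - 1 := by
          have h1 : (1:ℕ) ≤ 2^k0 := Nat.one_le_two_pow
          have h2 : 2^(k0+1) = 2*2^k0 := by ring
          omega
        calc ((2:ℝ) ^ ((1:ℝ)/4)) ^ R = (2:ℝ) ^ (R/4) := hpow
          _ ≤ (2:ℝ) ^ ((k0:ℝ)) := hexp
          _ = ((2^k0 : ℕ) : ℝ) := h2k0
          _ ≤ ((2^(k0+1) - 1 : ℕ) : ℝ) := by exact_mod_cast hle
      · intro D hDF
        rw [Finset.mem_erase] at hDF
        exact ⟨Finset.mem_powerset.mp hDF.2, Or.inr hDF.1⟩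
  obtain ⟨k, F, hkp', hkR, hcount, hF⟩ := hmain
  have hw : ∀ D : {x // x ∈ F}, ∃ W : lampGraph.Walk (∅, (0:ℤ)) (S, p),
      W.length ≤ 6 * p.toNat ∧
      (Yw S p k D.1, (0:ℤ)) ∈ W.support ∧
      ∀ v ∈ W.support, ∃ r : ℤ, 0 ≤ r ∧ r ≤ p ∧ v.2 = r ∧
        (v.1 = Xw S p k D.1 ∩ Finset.Ico 0 r ∨ v.1 = Xw S p k D.1 ∩ Finset.Icc 0 r ∨
         v.1 = symmDiff (Xw S p k D.1) (Ew S k D.1 ∩ Finset.Icc r p) ∨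
         v.1 = symmDiff (Xw S p k D.1) (Ew S k D.1 ∩ Finset.Ioc r p) ∨
         v.1 = symmDiff S (Gw S p k D.1 ∩ Finset.Icc r p) ∨
         v.1 = symmDiff S (Gw S p k D.1 ∩ Finset.Ioc r p)) :=
    fun D => walk_spec S p k D.1 hS (hF D.1 D.2).1 hkp'
  choose W hWlen hWY hWsupp using hw
  refine ⟨F.card, fun i => W (F.equivFin.symm i), hcount, ?_, ?_, ?_⟩
  · -- injectivity
    intro i j hij
    have hWinj : F.equivFin.symm i = F.equivFin.symm j := by
      set a := F.equivFin.symm i with ha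
      set b := F.equivFin.symm j with hb
      have hij' : W a = W b := hij
      have hY : (Yw S p k a.1, (0:ℤ)) ∈ (W b).support := by
        rw [← hij']; exact hWY a
      obtain ⟨r, h0r, hrp', hv2, hforms⟩ := hWsupp b _ hY
      have hr0 : r = 0 := by simpa using hv2.symm
      subst hr0
      apply Subtype.ext
      exact inj_aux S p k a.1 b.1 (hF a.1 a.2).1 (hF b.1 b.2).1 hkp' (hF a.1 a.2).2 hforms
    exact F.equivFin.symm.injective hWinj
  · -- lengths
    intro i
    have h1 := hWlen (F.equivFin.symm i)
    have h2 : (W (F.equivFin.symm i)).length ≤ 6 * d := by omega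
    calc ((W (F.equivFin.symm i)).length : ℝ) ≤ ((6 * d : ℕ) : ℝ) := by exact_mod_cast h2
      _ = 6 * (d:ℝ) := by push_cast; ring
  · -- disjointness outside balls
    intro i j hij v hvi hvj
    set a := F.equivFin.symm i with ha
    set b := F.equivFin.symm j with hb
    have hab : a.1 ≠ b.1 := by
      intro h
      exact hij (F.equivFin.symm.injective (Subtype.ext h))
    obtain ⟨r, h0r, hrp', hv2, hformi⟩ := hWsupp a v hvi
    obtain ⟨r', h0r', hrp2, hv2', hformj⟩ := hWsupp b v hvj
    have hrr : r' = r := by omega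
    rw [hrr] at hformj
    have hveq : v = (v.1, r) := by
      rw [← hv2]
    have h1 := phi_or_near S p k a.1 (hF a.1 a.2).1 hkp' (hF a.1 a.2).2 v.1 r h0r hrp' hformi
    have h2 := phi_or_near S p k b.1 (hF b.1 b.2).1 hkp' (hF b.1 b.2).2 v.1 r h0r hrp' hformj
    have hcast : ∀ m : ℕ, m ≤ 2*k → ((m:ℕ):ℝ) ≤ R := by
      intro m hm
      calc ((m:ℕ):ℝ) ≤ ((2*k : ℕ):ℝ) := by exact_mod_cast hm
        _ = 2*(k:ℝ) := by push_cast; ring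
        _ ≤ R := hkR
    rcases h1 with h1 | h1 | h1
    · rcases h2 with h2 | h2 | h2
      · exact absurd (h1 ▸ h2 ▸ rfl : a.1 = b.1) hab
      · left; rw [hveq]; exact hcast _ h2
      · right; rw [hveq]; exact hcast _ h2
    · left; rw [hveq]; exact hcast _ h1
    · right; rw [hveq]; exact hcast _ h1
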